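/- Let f₁ = x² + y² + Σ_{i+j=3} a_{ij}x^i y^j and f₂ = Σ_{i+j=3} b_{ij}x^i y^j with b₃₀ − b₁₂ ≠ 0. Then the projective transformation with q₁ = x, q₂ = y, q₃ = z + (a₃₀ − a₁₂)w, q₄ = (b₃₀ − b₁₂)w, p = 1 − ((a₃₀b₁₂ − a₁₂b₃₀)/(b₃₀ − b₁₂))x − ((a₃₀b₀₃ − a₁₂b₀₃ − a₀₃b₃₀ + a₀₃b₁₂)/(b₃₀ − b₁₂))y transforms the 3-jet of (f₁, f₂) into the form (x² + y² + k₁x²y, φ₃) for some constant k₁ ∈ ℝ and some homogeneous cubic φ₃, modulo terms of degree ≥ 4. -/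

import Mathlib

open Filter Asymptotics Topology

private lemma fst_bigO : (fun v : ℝ × ℝ => v.1) =O[𝓝 (0 : ℝ × ℝ)] fun v => ‖v‖ :=
  isBigO_of_le _ fun v => (norm_fst_le v).trans_eq (Real.norm_of_nonneg (norm_nonneg v)).symm

private lemma snd_bigO : (fun v : ℝ × ℝ => v.2) =O[𝓝 (0 : ℝ × ℝ)] fun v => ‖v‖ :=
  isBigO_of_le _ fun v => (norm_snd_le v).trans_eq (Real.norm_of_nonneg (norm_nonneg v)).symm

private lemma lin_bigO (c d : ℝ) :
    (fun v : ℝ × ℝ => c * v.1 + d * v.2) =O[𝓝 (0 : ℝ × ℝ)] fun v => ‖v‖ :=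
  (fst_bigO.const_mul_left c).add (snd_bigO.const_mul_left d)

private lemma quad_bigO :
    (fun v : ℝ × ℝ => v.1 ^ 2 + v.2 ^ 2) =O[𝓝 (0 : ℝ × ℝ)] fun v => ‖v‖ ^ 2 :=
  (fst_bigO.pow 2).add (snd_bigO.pow 2)

private lemma cubic_bigO (c30 c21 c12 c03 : ℝ) :
    (fun v : ℝ × ℝ => c30 * v.1 ^ 3 + c21 * v.1 ^ 2 * v.2 + c12 * v.1 * v.2 ^ 2
      + c03 * v.2 ^ 3) =O[𝓝 (0 : ℝ × ℝ)] fun v => ‖v‖ ^ 3 := by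
  have t30 := (fst_bigO.pow 3).const_mul_left c30
  have t21 : (fun v : ℝ × ℝ => c21 * v.1 ^ 2 * v.2) =O[𝓝 (0 : ℝ × ℝ)] fun v => ‖v‖ ^ 3 :=
    (((fst_bigO.pow 2).mul snd_bigO).const_mul_left c21).congr
      (fun v => by ring) (fun v => by ring)
  have t12 : (fun v : ℝ × ℝ => c12 * v.1 * v.2 ^ 2) =O[𝓝 (0 : ℝ × ℝ)] fun v => ‖v‖ ^ 3 :=
    ((fst_bigO.mul (snd_bigO.pow 2)).const_mul_left c12).congr
      (fun v => by ring) (fun v => by ring)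
  have t03 := (snd_bigO.pow 3).const_mul_left c03
  exact ((t30.add t21).add t12).add t03

private lemma norm_pow_littleO_one (n : ℕ) (hn : 0 < n) :
    (fun v : ℝ × ℝ => ‖v‖ ^ n) =o[𝓝 (0 : ℝ × ℝ)] fun _ => (1 : ℝ) := by
  rw [isLittleO_one_iff]
  simpa using (tendsto_norm_zero.comp (tendsto_id (α := ℝ × ℝ) (x := 𝓝 0))).pow n |>.congr
    (fun v => rfl) |>.mono_right (by simp [hn.ne'] : 𝓝 ((0:ℝ)^n) ≤ 𝓝 0)

private lemma div_form1 (p X Y Q A B C D : ℝ) (hp : p ≠ 0) :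
    Q / p - ((X / p) ^ 2 + (Y / p) ^ 2 + A * (X / p) ^ 3 + B * (X / p) ^ 2 * (Y / p)
      + C * (X / p) * (Y / p) ^ 2 + D * (Y / p) ^ 3)
    = (Q * p ^ 2 - (X ^ 2 + Y ^ 2) * p - (A * X ^ 3 + B * X ^ 2 * Y + C * X * Y ^ 2
        + D * Y ^ 3)) / p ^ 3 := by
  field_simp
  ring

private lemma div_form2 (p X Y Q A B C D : ℝ) (hp : p ≠ 0) :
    Q / p - (A * (X / p) ^ 3 + B * (X / p) ^ 2 * (Y / p)
      + C * (X / p) * (Y / p) ^ 2 + D * (Y / p) ^ 3)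
    = (Q * p ^ 2 - (A * X ^ 3 + B * X ^ 2 * Y + C * X * Y ^ 2 + D * Y ^ 3)) / p ^ 3 := by
  field_simp

set_option maxHeartbeats 1000000 in
/-- Inflection case `j²f = (x² + y², 0)` with `b₃₀ − b₁₂ ≠ 0`: the stated projective
transformation brings the 3-jet of `(f₁, f₂)` to the form `(x² + y² + k₁x²y, φ₃)` for some
constant `k₁` and some homogeneous cubic `φ₃`, modulo degree ≥ 4 along the graph of the
target. -/
theorem jet3_inflection_plus_normal_form
    (a30 a21 a12 a03 b30 b21 b12 b03 : ℝ) (hb : b30 - b12 ≠ 0)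
    (f₁ f₂ : ℝ × ℝ → ℝ)
    (hf₁ : f₁ = fun v => v.1 ^ 2 + v.2 ^ 2 + a30 * v.1 ^ 3 + a21 * v.1 ^ 2 * v.2
      + a12 * v.1 * v.2 ^ 2 + a03 * v.2 ^ 3)
    (hf₂ : f₂ = fun v => b30 * v.1 ^ 3 + b21 * v.1 ^ 2 * v.2
      + b12 * v.1 * v.2 ^ 2 + b03 * v.2 ^ 3) :
    ∃ (k₁ p30 p21 p12 p03 : ℝ) (g₁ g₂ P Q₃ : ℝ × ℝ → ℝ),
      g₁ = (fun v => v.1 ^ 2 + v.2 ^ 2 + k₁ * v.1 ^ 2 * v.2) ∧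
      g₂ = (fun v => p30 * v.1 ^ 3 + p21 * v.1 ^ 2 * v.2
        + p12 * v.1 * v.2 ^ 2 + p03 * v.2 ^ 3) ∧
      Q₃ = (fun v => g₁ v + (a30 - a12) * g₂ v) ∧
      P = (fun v => 1 - ((a30 * b12 - a12 * b30) / (b30 - b12)) * v.1
        - ((a30 * b03 - a12 * b03 - a03 * b30 + a03 * b12) / (b30 - b12)) * v.2) ∧
      ((fun v : ℝ × ℝ => Q₃ v / P v - f₁ (v.1 / P v, v.2 / P v))
          =o[𝓝 (0 : ℝ × ℝ)] fun v => ‖v‖ ^ 3) ∧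
      ((fun v : ℝ × ℝ => ((b30 - b12) * g₂ v) / P v - f₂ (v.1 / P v, v.2 / P v))
          =o[𝓝 (0 : ℝ × ℝ)] fun v => ‖v‖ ^ 3) := by
  subst hf₁ hf₂
  obtain ⟨α, hα⟩ : ∃ x : ℝ, x = (a30 * b12 - a12 * b30) / (b30 - b12) := ⟨_, rfl⟩
  obtain ⟨β, hβ⟩ : ∃ x : ℝ,
      x = (a30 * b03 - a12 * b03 - a03 * b30 + a03 * b12) / (b30 - b12) := ⟨_, rfl⟩
  obtain ⟨k₁, hk⟩ : ∃ x : ℝ, x = a21 + β - (a30 - a12) * b21 / (b30 - b12) := ⟨_, rfl⟩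
  obtain ⟨P, hP⟩ : ∃ P : ℝ × ℝ → ℝ, P = fun v => 1 - α * v.1 - β * v.2 := ⟨_, rfl⟩
  obtain ⟨L, hL⟩ : ∃ L : ℝ × ℝ → ℝ, L = fun v => α * v.1 + β * v.2 := ⟨_, rfl⟩
  obtain ⟨CQ, hCQ⟩ : ∃ g : ℝ × ℝ → ℝ, g = fun v => (a30 + α) * v.1 ^ 3
      + (a21 + β) * v.1 ^ 2 * v.2 + (a12 + α) * v.1 * v.2 ^ 2 + (a03 + β) * v.2 ^ 3 :=
    ⟨_, rfl⟩
  obtain ⟨C2, hC2⟩ : ∃ g : ℝ × ℝ → ℝ, g = fun v => b30 * v.1 ^ 3 + b21 * v.1 ^ 2 * v.2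
      + b12 * v.1 * v.2 ^ 2 + b03 * v.2 ^ 3 := ⟨_, rfl⟩
  -- P is eventually nonzero
  have hPcont : Continuous P := by rw [hP]; continuity
  have hP0 : P 0 = 1 := by simp [hP]
  have hPne : ∀ᶠ v : ℝ × ℝ in 𝓝 0, P v ≠ 0 := by
    have := hPcont.tendsto 0
    rw [hP0] at this
    exact this.eventually_ne one_ne_zero
  have hPinv : (fun v : ℝ × ℝ => (P v ^ 3)⁻¹) =O[𝓝 (0 : ℝ × ℝ)] fun _ => (1 : ℝ) := by
    have h1 : Tendsto (fun v : ℝ × ℝ => (P v ^ 3)⁻¹) (𝓝 0) (𝓝 ((P 0 ^ 3)⁻¹)) :=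
      ((hPcont.tendsto 0).pow 3).inv₀ (by rw [hP0]; norm_num)
    exact h1.isBigO_one ℝ
  -- little-o atoms
  have hn1 : (fun v : ℝ × ℝ => ‖v‖) =o[𝓝 (0 : ℝ × ℝ)] fun _ => (1 : ℝ) :=
    (isLittleO_one_iff ℝ).mpr tendsto_norm_zero
  have h21 : (fun v : ℝ × ℝ => ‖v‖ ^ 2) =o[𝓝 (0 : ℝ × ℝ)] fun v => ‖v‖ := by
    have := (isLittleO_pow_pow (𝕜 := ℝ) (one_lt_two)).comp_tendsto
      (tendsto_norm_zero (E := ℝ × ℝ))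
    simpa [pow_one, Function.comp_def] using this
  have hLO : L =O[𝓝 (0 : ℝ × ℝ)] fun v => ‖v‖ := by rw [hL]; exact lin_bigO α β
  have hL1 : L =o[𝓝 (0 : ℝ × ℝ)] fun _ => (1 : ℝ) := hLO.trans_isLittleO hn1
  have hL2 : (fun v => L v ^ 2) =o[𝓝 (0 : ℝ × ℝ)] fun v => ‖v‖ :=
    (hLO.pow 2).trans_isLittleO h21
  have hL2' : (fun v => L v ^ 2) =o[𝓝 (0 : ℝ × ℝ)] fun _ => (1 : ℝ) :=
    (hLO.pow 2).trans_isLittleO (norm_pow_littleO_one 2 two_pos)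
  have hCQO : CQ =O[𝓝 (0 : ℝ × ℝ)] fun v => ‖v‖ ^ 3 := by
    rw [hCQ]; exact cubic_bigO _ _ _ _
  have hC2O : C2 =O[𝓝 (0 : ℝ × ℝ)] fun v => ‖v‖ ^ 3 := by
    rw [hC2]; exact cubic_bigO _ _ _ _
  have e2 : (fun v : ℝ × ℝ => ‖v‖ ^ 3 * 1) = fun v => ‖v‖ ^ 3 := funext fun v => mul_one _
  have e1 : (fun v : ℝ × ℝ => ‖v‖ ^ 2 * ‖v‖) = fun v => ‖v‖ ^ 3 := funext fun v => by ring
  have t1 : (fun v : ℝ × ℝ => (v.1 ^ 2 + v.2 ^ 2) * L v ^ 2)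
      =o[𝓝 (0 : ℝ × ℝ)] fun v => ‖v‖ ^ 3 := by
    have := quad_bigO.mul_isLittleO hL2; rwa [e1] at this
  have t2 : (fun v : ℝ × ℝ => CQ v * L v) =o[𝓝 (0 : ℝ × ℝ)] fun v => ‖v‖ ^ 3 := by
    have := hCQO.mul_isLittleO hL1; rwa [e2] at this
  have t3 : (fun v : ℝ × ℝ => CQ v * L v ^ 2) =o[𝓝 (0 : ℝ × ℝ)] fun v => ‖v‖ ^ 3 := by
    have := hCQO.mul_isLittleO hL2'; rwa [e2] at this
  have t2' : (fun v : ℝ × ℝ => C2 v * L v) =o[𝓝 (0 : ℝ × ℝ)] fun v => ‖v‖ ^ 3 := by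
    have := hC2O.mul_isLittleO hL1; rwa [e2] at this
  have t3' : (fun v : ℝ × ℝ => C2 v * L v ^ 2) =o[𝓝 (0 : ℝ × ℝ)] fun v => ‖v‖ ^ 3 := by
    have := hC2O.mul_isLittleO hL2'; rwa [e2] at this
  have hN1 : (fun v : ℝ × ℝ => (v.1 ^ 2 + v.2 ^ 2) * L v ^ 2 - 2 * (CQ v * L v)
      + CQ v * L v ^ 2) =o[𝓝 (0 : ℝ × ℝ)] fun v => ‖v‖ ^ 3 :=
    (t1.sub (t2.const_mul_left 2)).add t3
  have hN2 : (fun v : ℝ × ℝ => C2 v * L v ^ 2 - 2 * (C2 v * L v))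
      =o[𝓝 (0 : ℝ × ℝ)] fun v => ‖v‖ ^ 3 :=
    t3'.sub (t2'.const_mul_left 2)
  have hdiv1 : (fun v : ℝ × ℝ => ((v.1 ^ 2 + v.2 ^ 2) * L v ^ 2 - 2 * (CQ v * L v)
      + CQ v * L v ^ 2) / P v ^ 3) =o[𝓝 (0 : ℝ × ℝ)] fun v => ‖v‖ ^ 3 := by
    have := hN1.mul_isBigO hPinv
    rw [e2] at this
    exact this.congr (fun v => (div_eq_mul_inv _ _).symm) fun v => rfl
  have hdiv2 : (fun v : ℝ × ℝ => (C2 v * L v ^ 2 - 2 * (C2 v * L v)) / P v ^ 3)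
      =o[𝓝 (0 : ℝ × ℝ)] fun v => ‖v‖ ^ 3 := by
    have := hN2.mul_isBigO hPinv
    rw [e2] at this
    exact this.congr (fun v => (div_eq_mul_inv _ _).symm) fun v => rfl
  have hQ : ∀ v : ℝ × ℝ, v.1 ^ 2 + v.2 ^ 2 + k₁ * v.1 ^ 2 * v.2 + (a30 - a12) *
      (b30 / (b30 - b12) * v.1 ^ 3 + b21 / (b30 - b12) * v.1 ^ 2 * v.2
        + b12 / (b30 - b12) * v.1 * v.2 ^ 2 + b03 / (b30 - b12) * v.2 ^ 3)
      = v.1 ^ 2 + v.2 ^ 2 + CQ v := by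
    intro v
    rw [hCQ, hk, hα, hβ]
    field_simp
    try ring
  have hG : ∀ v : ℝ × ℝ, (b30 - b12) * (b30 / (b30 - b12) * v.1 ^ 3
      + b21 / (b30 - b12) * v.1 ^ 2 * v.2 + b12 / (b30 - b12) * v.1 * v.2 ^ 2
      + b03 / (b30 - b12) * v.2 ^ 3) = C2 v := by
    intro v
    rw [hC2]
    field_simp
    try ring
  refine ⟨k₁, b30 / (b30 - b12), b21 / (b30 - b12), b12 / (b30 - b12), b03 / (b30 - b12),
    _, _, P,
    (fun v : ℝ × ℝ => v.1 ^ 2 + v.2 ^ 2 + k₁ * v.1 ^ 2 * v.2 + (a30 - a12) *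
      (b30 / (b30 - b12) * v.1 ^ 3 + b21 / (b30 - b12) * v.1 ^ 2 * v.2
        + b12 / (b30 - b12) * v.1 * v.2 ^ 2 + b03 / (b30 - b12) * v.2 ^ 3)),
    rfl, rfl, rfl, by rw [hP, hα, hβ], ?_, ?_⟩
  · refine hdiv1.congr' ?_ EventuallyEq.rfl
    filter_upwards [hPne] with v hPv
    try dsimp only
    rw [hQ v, div_form1 (P v) v.1 v.2 _ a30 a21 a12 a03 hPv]
    congr 1
    rw [hP, hL, hCQ]
    try dsimp only
    ring
  · refine hdiv2.congr' ?_ EventuallyEq.rfl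
    filter_upwards [hPne] with v hPv
    try dsimp only
    rw [hG v, div_form2 (P v) v.1 v.2 _ b30 b21 b12 b03 hPv]
    congr 1
    rw [hP, hL, hC2]
    try dsimp only
    ring
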